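/- For the cycle C_n, the allocation of two brushes to any single vertex v_i cleans the graph, every singleton {v_i}, v_i ∈ V(C_n), is a brush centre of C_n, and hence C_n has exactly n possible brush centres; in particular b_r(C_n) = 2. -/

import Mathlib

open Finset
open scoped Classical

/-! ## The cleaning model and brush numbers -/

variable {V : Type*}

/-- `π` is a cleaning sequence (an ordering of the vertices, given by an injective time
function) for the allocation `β` of brushes: every vertex, at the moment it cleans, holds at
least as many brushes (its initial brushes plus one brush received from each already-cleaned
neighbour) as it has dirty incident edges (edges to not-yet-cleaned neighbours), so it can send
one brush along each dirty incident edge. -/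
def SimpleGraph.CleaningOrder [Fintype V] (G : SimpleGraph V) (β : V → ℕ) (π : V → ℕ) : Prop :=
  Function.Injective π ∧
  ∀ v : V, (Finset.univ.filter fun u => G.Adj v u ∧ π v < π u).card ≤
    β v + (Finset.univ.filter fun u => G.Adj v u ∧ π u < π v).card

/-- The allocation `β` of brushes can clean the graph `G` (all edges start dirty, and
sequentially every vertex with at least as many brushes as dirty incident edges may clean,
sending one brush along each dirty incident edge). -/
def SimpleGraph.Cleans [Fintype V] (G : SimpleGraph V) (β : V → ℕ) : Prop :=
  ∃ π : V → ℕ, G.CleaningOrder β π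

/-- The brush number of `G`: the minimum total number of brushes, over all initial
allocations, which allows all edges of `G` to be cleaned. -/
noncomputable def SimpleGraph.brushNumber [Fintype V] (G : SimpleGraph V) : ℕ :=
  sInf {b : ℕ | ∃ β : V → ℕ, (∑ v, β v) = b ∧ G.Cleans β}

/-- The number of brushes located at vertex `v` at the end of the cleaning sequence `π`
with initial allocation `β`: `v` keeps its initial brushes, receives one from each neighbour
cleaned before it, and sends one to each neighbour cleaned after it. -/
noncomputable def SimpleGraph.finalBrushes [Fintype V] (G : SimpleGraph V)
    (β : V → ℕ) (π : V → ℕ) (v : V) : ℕ :=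
  β v + (Finset.univ.filter fun u => G.Adj v u ∧ π u < π v).card
      - (Finset.univ.filter fun u => G.Adj v u ∧ π v < π u).card

/-! ## Orientations -/

/-- An orientation of a simple graph `G`: each edge is given exactly one direction. -/
structure SimpleGraph.GraphOrientation (G : SimpleGraph V) where
  /-- the arc relation of the orientation -/
  arc : V → V → Prop
  adj_iff : ∀ u v, G.Adj u v ↔ (arc u v ∨ arc v u)
  asymm : ∀ u v, arc u v → ¬ arc v u

/-- Out-degree of a vertex under an orientation. -/
noncomputable def SimpleGraph.GraphOrientation.outDeg [Fintype V] {G : SimpleGraph V}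
    (α : G.GraphOrientation) (v : V) : ℕ :=
  (Finset.univ.filter fun u => α.arc v u).card

/-- In-degree of a vertex under an orientation. -/
noncomputable def SimpleGraph.GraphOrientation.inDeg [Fintype V] {G : SimpleGraph V}
    (α : G.GraphOrientation) (v : V) : ℕ :=
  (Finset.univ.filter fun u => α.arc u v).card

/-- `b_r^α(G)`: the minimum number of brushes needed to clean `G` when brushes may only
travel along out-arcs of the orientation `α` (so a vertex may clean only after all its
in-neighbours have cleaned, and then needs one brush for each out-arc), with value `∞` if
cleaning is impossible under `α`. -/
noncomputable def SimpleGraph.GraphOrientation.brushNumber [Fintype V] {G : SimpleGraph V}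
    (α : G.GraphOrientation) : ℕ∞ :=
  sInf {c : ℕ∞ | ∃ (β : V → ℕ) (π : V → ℕ), Function.Injective π ∧
    (∀ u v, α.arc u v → π u < π v) ∧
    (∀ v, α.outDeg v ≤ β v + α.inDeg v) ∧ c = (∑ v, β v : ℕ)}

/-! ## Brush centres -/

/-- `B` is a possible location set for a minimal brush allocation: the `b_r(G)` brushes can
be allocated to vertices of `B` so that `G` can be cleaned. -/
def SimpleGraph.CentreCandidate [Fintype V] (G : SimpleGraph V) (B : Finset V) : Prop :=
  ∃ β : V → ℕ, (∀ v, β v ≠ 0 → v ∈ B) ∧ (∑ v, β v) = G.brushNumber ∧ G.Cleans β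

/-- The maximum distance between vertices of `B` in `G`. -/
noncomputable def SimpleGraph.centreSpread [Fintype V] (G : SimpleGraph V) (B : Finset V) : ℕ :=
  B.sup fun v => B.sup fun u => G.dist v u

/-- `B` is a brush centre of `G`: a set of minimum cardinality to which the `b_r(G)` brushes
can be allocated so that `G` can be cleaned (primary condition), and which, among such sets of
minimum cardinality, minimizes the maximum distance between its vertices (secondary
condition). -/
def SimpleGraph.IsBrushCentre [Fintype V] (G : SimpleGraph V) (B : Finset V) : Prop :=
  G.CentreCandidate B ∧
  (∀ B' : Finset V, G.CentreCandidate B' → B.card ≤ B'.card) ∧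
  (∀ B' : Finset V, G.CentreCandidate B' → B'.card = B.card →
    G.centreSpread B ≤ G.centreSpread B')

/-! ## Jaco graphs -/

/-- The in-degree `d⁻(v_j)` of the vertex `v_j` in the infinite Jaco graph `J_∞(1)`:
`(v_i, v_j)` is an arc iff `1 ≤ i < j` and `2i - d⁻(v_i) ≥ j`. -/
noncomputable def jacoIn (j : ℕ) : ℕ :=
  Nat.strongRecOn j fun j ih =>
    ((Finset.range j).attach.filter fun i =>
      0 < i.1 ∧ j + ih i.1 (Finset.mem_range.mp i.2) ≤ 2 * i.1).card

/-- The arc relation of the infinite Jaco graph `J_∞(1)`: `(v_i, v_j)` is an arc iff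
`1 ≤ i < j` and `2i - d⁻(v_i) ≥ j`. -/
def jacoArc (i j : ℕ) : Prop := 0 < i ∧ i < j ∧ j + jacoIn i ≤ 2 * i

/-- The finite Jaco graph `J_n(1)` as a simple graph on `Fin n`;
vertex `k : Fin n` stands for `v_{k+1}`. -/
def jacoGraph (n : ℕ) : SimpleGraph (Fin n) where
  Adj a b := jacoArc ((a : ℕ) + 1) ((b : ℕ) + 1) ∨ jacoArc ((b : ℕ) + 1) ((a : ℕ) + 1)
  symm := by refine ⟨?_⟩; intro a b h; tauto
  loopless := by refine ⟨?_⟩; intro a h; rcases h with h | h <;> exact absurd h.2.1 (lt_irrefl _)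

/-- The out-degree of `v_i` in the finite Jaco graph `J_n(1)` (under its defining
orientation). -/
noncomputable def jacoOutDeg (n i : ℕ) : ℕ := ((Finset.Icc 1 n).filter fun j => jacoArc i j).card

/-- The in-degree of `v_j` in the finite Jaco graph `J_n(1)` (under its defining
orientation). -/
noncomputable def jacoInDeg (n j : ℕ) : ℕ := ((Finset.Icc 1 n).filter fun i => jacoArc i j).card

/-- The degree of `v_j` in the finite Jaco graph `J_n(1)`. -/
noncomputable def jacoDegree (n j : ℕ) : ℕ := jacoInDeg n j + jacoOutDeg n j

/-- The index `i` of the prime Jaconian vertex `v_i` of `J_n(1)`: the lowest-indexed vertex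
attaining the maximum degree `Δ(J_n(1))`. -/
noncomputable def primeJaconianIdx (n : ℕ) : ℕ :=
  sInf {i : ℕ | i ∈ Finset.Icc 1 n ∧ ∀ j ∈ Finset.Icc 1 n, jacoDegree n j ≤ jacoDegree n i}

/-! ## The Mycielskian -/

/-- The adjacency relation of the Mycielskian of `G`: `Sum.inl v` is the original vertex `v`,
`Sum.inr (Sum.inl v)` is its shadow `x_v`, and `Sum.inr (Sum.inr ())` is the apex `w`. -/
def mycAdj (G : SimpleGraph V) : V ⊕ V ⊕ Unit → V ⊕ V ⊕ Unit → Prop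
  | Sum.inl u, Sum.inl v => G.Adj u v
  | Sum.inl u, Sum.inr (Sum.inl v) => G.Adj u v
  | Sum.inr (Sum.inl u), Sum.inl v => G.Adj u v
  | Sum.inr (Sum.inl _), Sum.inr (Sum.inr _) => True
  | Sum.inr (Sum.inr _), Sum.inr (Sum.inl _) => True
  | _, _ => False

/-- The Mycielskian `μ(G)` of a simple graph `G`: vertex set `V(G) ∪ {x_v : v ∈ V(G)} ∪ {w}`,
with edges `uv` for `uv ∈ E(G)`, `u x_v` and `v x_u` for `uv ∈ E(G)`, and `w x_v` for all
`v ∈ V(G)`. -/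
def mycielskian (G : SimpleGraph V) : SimpleGraph (V ⊕ V ⊕ Unit) where
  Adj := mycAdj G
  symm := by
    refine ⟨?_⟩
    rintro (u | u | u) (v | v | v) h <;> simp only [mycAdj] at h ⊢ <;> first
      | exact h.symm | exact h | trivial
  loopless := by
    refine ⟨?_⟩
    rintro (u | u | u) h <;> simp only [mycAdj] at h <;> exact G.loopless.irrefl _ h

/-! ## Disjoint unions -/

/-- The disjoint union of an indexed family of simple graphs. -/
def sigmaGraph {ι : Type*} {W : ι → Type*} (G : ∀ i, SimpleGraph (W i)) :
    SimpleGraph (Σ i, W i) where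
  Adj a b := ∃ (i : ι) (x y : W i), (G i).Adj x y ∧ a = ⟨i, x⟩ ∧ b = ⟨i, y⟩
  symm := by refine ⟨?_⟩; rintro _ _ ⟨i, x, y, h, rfl, rfl⟩; exact ⟨i, y, x, h.symm, rfl, rfl⟩
  loopless := by
    refine ⟨?_⟩
    rintro _ ⟨i, x, y, h, rfl, he⟩
    obtain rfl : x = y := by simpa using he
    exact (G i).loopless.irrefl x h

section CycleAux

lemma eq_classical {α : Type*} (p : α → Prop) (h : DecidablePred p) (s : Finset α) :
    @Finset.filter α p h s = @Finset.filter α p (fun a => Classical.propDecidable (p a)) s := by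
  congr!

lemma cycle_cleans (m : ℕ) (v : Fin (m + 3)) :
    (SimpleGraph.cycleGraph (m + 3)).Cleans (fun u => if u = v then 2 else 0) := by
  set G := SimpleGraph.cycleGraph (m + 3) with hG
  set π : Fin (m + 3) → ℕ := fun u => ((u - v : Fin (m + 3)) : ℕ) with hπ
  have hinj : Function.Injective π := by
    intro a b h
    have h2 : a - v = b - v := Fin.val_injective h
    simpa [sub_left_inj] using h2
  refine ⟨π, hinj, fun u => ?_⟩
  have hdisj : Disjoint (Finset.univ.filter fun w => G.Adj u w ∧ π u < π w)
      (Finset.univ.filter fun w => G.Adj u w ∧ π w < π u) := by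
    rw [Finset.disjoint_left]
    intro w hwL hwE
    rw [Finset.mem_filter] at hwL hwE
    omega
  have hunion : (Finset.univ.filter fun w => G.Adj u w ∧ π u < π w)
      ∪ (Finset.univ.filter fun w => G.Adj u w ∧ π w < π u) = G.neighborFinset u := by
    ext w
    simp only [Finset.mem_union, Finset.mem_filter, Finset.mem_univ, true_and,
      SimpleGraph.mem_neighborFinset]
    constructor
    · rintro (⟨h, _⟩ | ⟨h, _⟩) <;> exact h
    · intro h
      have hne : π u ≠ π w := fun he => h.ne (hinj he)
      rcases lt_or_gt_of_ne hne with h' | h'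
      · exact Or.inl ⟨h, h'⟩
      · exact Or.inr ⟨h, h'⟩
  have hsum : (Finset.univ.filter fun w => G.Adj u w ∧ π u < π w).card
      + (Finset.univ.filter fun w => G.Adj u w ∧ π w < π u).card = 2 := by
    rw [← Finset.card_union_of_disjoint hdisj, hunion,
      SimpleGraph.card_neighborFinset_eq_degree]
    exact SimpleGraph.cycleGraph_degree_three_le
  by_cases huv : u = v
  · beta_reduce
    rw [if_pos huv]
    simp only [eq_classical] at hsum ⊢
    omega
  · have hadj : G.Adj u (u - 1) := by
      rw [hG, SimpleGraph.cycleGraph_adj]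
      left
      rw [sub_sub_cancel]
    have hlt : π (u - 1) < π u := by
      have ha : u - v ≠ 0 := sub_ne_zero_of_ne huv
      have hrw : u - 1 - v = (u - v) - 1 := sub_right_comm u 1 v
      show ((u - 1 - v : Fin (m + 3)) : ℕ) < ((u - v : Fin (m + 3)) : ℕ)
      rw [hrw, Fin.coe_sub_one, if_neg ha]
      have hpos : 0 < ((u - v : Fin (m + 3)) : ℕ) := by
        rcases Nat.eq_zero_or_pos ((u - v : Fin (m + 3)) : ℕ) with h0 | h0
        · exact absurd (Fin.ext h0) ha
        · exact h0
      omega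
    have hEpos : 1 ≤ (Finset.univ.filter fun w => G.Adj u w ∧ π w < π u).card :=
      Finset.card_pos.mpr ⟨u - 1, by rw [Finset.mem_filter]; exact ⟨Finset.mem_univ _, hadj, hlt⟩⟩
    beta_reduce
    beta_reduce
    rw [if_neg huv]
    simp only [eq_classical] at hsum hEpos ⊢
    omega

lemma cycle_two_le (m : ℕ) (β : Fin (m + 3) → ℕ)
    (h : (SimpleGraph.cycleGraph (m + 3)).Cleans β) : 2 ≤ ∑ v, β v := by
  obtain ⟨π, hinj, hcond⟩ := h
  obtain ⟨v, -, hv⟩ := Finset.exists_min_image Finset.univ π ⟨0, Finset.mem_univ 0⟩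
  have h1 := hcond v
  have hE : (Finset.univ.filter fun u =>
      (SimpleGraph.cycleGraph (m + 3)).Adj v u ∧ π u < π v) = ∅ := by
    rw [Finset.filter_eq_empty_iff]
    rintro u - ⟨-, hlt⟩
    exact absurd hlt (not_lt.mpr (hv u (Finset.mem_univ u)))
  have hLfull : (Finset.univ.filter fun u =>
      (SimpleGraph.cycleGraph (m + 3)).Adj v u ∧ π v < π u)
      = (SimpleGraph.cycleGraph (m + 3)).neighborFinset v := by
    ext u
    simp only [Finset.mem_filter, Finset.mem_univ, true_and,
      SimpleGraph.mem_neighborFinset]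
    refine ⟨fun h => h.1, fun h => ⟨h, ?_⟩⟩
    exact lt_of_le_of_ne (hv u (Finset.mem_univ u)) (fun he => h.ne (hinj he))
  simp only [eq_classical] at h1 hE hLfull
  rw [hE, hLfull, Finset.card_empty,
    SimpleGraph.card_neighborFinset_eq_degree,
    SimpleGraph.cycleGraph_degree_three_le] at h1
  calc 2 ≤ β v := by omega
  _ ≤ ∑ u, β u := Finset.single_le_sum (fun _ _ => Nat.zero_le _) (Finset.mem_univ v)

end CycleAux

/-- For the cycle `C_n`, the allocation of two brushes to any single vertex
cleans the graph, every singleton `{v}` is a brush centre of `C_n`, and `C_n` has exactly these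
`n` brush centres; in particular `b_r(C_n) = 2`. -/
theorem brushCentres_cycleGraph (n : ℕ) (hn : 3 ≤ n) :
    (∀ v : Fin n, (SimpleGraph.cycleGraph n).Cleans (fun u => if u = v then 2 else 0)) ∧
    (∀ v : Fin n, (SimpleGraph.cycleGraph n).IsBrushCentre {v}) ∧
    (∀ B : Finset (Fin n), (SimpleGraph.cycleGraph n).IsBrushCentre B → ∃ v, B = {v}) ∧
    {B : Finset (Fin n) | (SimpleGraph.cycleGraph n).IsBrushCentre B}.ncard = n ∧
    (SimpleGraph.cycleGraph n).brushNumber = 2 := by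
  obtain ⟨m, rfl⟩ : ∃ m, n = m + 3 := ⟨n - 3, by omega⟩
  have hcleans := cycle_cleans m
  have hsumβ : ∀ v : Fin (m + 3), (∑ u, (if u = v then 2 else 0 : ℕ)) = 2 := by
    intro v; simp
  have hmem2 : (2 : ℕ) ∈ {b : ℕ | ∃ β : Fin (m + 3) → ℕ,
      (∑ v, β v) = b ∧ (SimpleGraph.cycleGraph (m + 3)).Cleans β} :=
    ⟨fun u => if u = 0 then 2 else 0, hsumβ 0, hcleans 0⟩
  have hbr : (SimpleGraph.cycleGraph (m + 3)).brushNumber = 2 := by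
    rw [SimpleGraph.brushNumber]
    apply le_antisymm (Nat.sInf_le hmem2)
    obtain ⟨β, hβs, hβc⟩ := Nat.sInf_mem ⟨2, hmem2⟩
    rw [← hβs]
    exact cycle_two_le m β hβc
  have hcand : ∀ v : Fin (m + 3),
      (SimpleGraph.cycleGraph (m + 3)).CentreCandidate {v} := by
    intro v
    refine ⟨fun u => if u = v then 2 else 0, fun u hu => ?_, by rw [hbr]; exact hsumβ v,
      hcleans v⟩
    by_contra h
    simp only [Finset.mem_singleton] at h
    simp [h] at hu
  have hcard1 : ∀ B' : Finset (Fin (m + 3)),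
      (SimpleGraph.cycleGraph (m + 3)).CentreCandidate B' → 1 ≤ B'.card := by
    rintro B' ⟨β, hsupp, hsum, -⟩
    rw [hbr] at hsum
    have hex : ∃ u, β u ≠ 0 := by
      by_contra h
      push_neg at h
      simp [h] at hsum
    obtain ⟨u, hu⟩ := hex
    exact Finset.card_pos.mpr ⟨u, hsupp u hu⟩
  have hcentre : ∀ v : Fin (m + 3),
      (SimpleGraph.cycleGraph (m + 3)).IsBrushCentre {v} := by
    intro v
    refine ⟨hcand v, fun B' hB' => by simpa using hcard1 B' hB', fun B' hB' _ => ?_⟩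
    have hz : (SimpleGraph.cycleGraph (m + 3)).centreSpread {v} = 0 := by
      simp [SimpleGraph.centreSpread]
    omega
  have hsingle : ∀ B : Finset (Fin (m + 3)),
      (SimpleGraph.cycleGraph (m + 3)).IsBrushCentre B → ∃ v, B = {v} := by
    rintro B ⟨hBc, hmin, -⟩
    have h1 : B.card ≤ 1 := by simpa using hmin {0} (hcand 0)
    exact Finset.card_eq_one.mp (le_antisymm h1 (hcard1 B hBc))
  have hset : {B : Finset (Fin (m + 3)) | (SimpleGraph.cycleGraph (m + 3)).IsBrushCentre B}
      = Set.range (fun v : Fin (m + 3) => ({v} : Finset (Fin (m + 3)))) := by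
    ext B
    simp only [Set.mem_setOf_eq, Set.mem_range]
    constructor
    · intro h
      obtain ⟨v, hv⟩ := hsingle B h
      exact ⟨v, hv.symm⟩
    · rintro ⟨v, rfl⟩
      exact hcentre v
  refine ⟨hcleans, hcentre, hsingle, ?_, hbr⟩
  rw [hset, ← Set.image_univ, Set.ncard_image_of_injective _ Finset.singleton_injective,
    Set.ncard_univ, Nat.card_eq_fintype_card, Fintype.card_fin]
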